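/- For any coupling π of probability vectors α, β on a connected weighted graph, the measure effective resistance satisfies r_{αβ} = (α−β)ᵀL⁺(α−β) ≤ Σ_{i,j} π_{ij} r_{ij}, where r_{ij} = (δᵢ − δⱼ)ᵀ L⁺ (δᵢ − δⱼ) is the pairwise effective resistance. -/

import Mathlib

open Matrix Finset

theorem lp_symm' (n : ℕ) (L Lp : Matrix (Fin n) (Fin n) ℝ)
    (hpsd : L.PosSemidef)
    (hp1 : L * Lp * L = L) (hp2 : Lp * L * Lp = Lp)
    (hp3 : (L * Lp)ᵀ = L * Lp) (hp4 : (Lp * L)ᵀ = Lp * L) : Lpᵀ = Lp := by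
  have hLt : Lᵀ = L := hpsd.1
  have e1 : Lpᵀ * L = L * Lp := by rw [← hp3, transpose_mul, hLt]
  have e2 : L * Lpᵀ = Lp * L := by rw [← hp4, transpose_mul, hLt]
  have e3 : L * Lpᵀ * L = L := by
    have := congrArg transpose hp1
    simpa [transpose_mul, hLt, mul_assoc] using this
  have e4 : Lpᵀ * L * Lpᵀ = Lpᵀ := by
    have := congrArg transpose hp2
    simpa [transpose_mul, hLt, mul_assoc] using this
  have key1 : Lp = Lp * L * Lpᵀ := by
    calc Lp = Lp * L * Lp := hp2.symm
    _ = Lp * (Lpᵀ * L) := by rw [mul_assoc, ← e1]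
    _ = Lp * (Lpᵀ * (L * Lp * L)) := by rw [hp1]
    _ = Lp * ((Lpᵀ * L) * (Lp * L)) := by simp only [mul_assoc]
    _ = Lp * ((L * Lp) * (L * Lpᵀ)) := by rw [e1, e2]
    _ = (Lp * L * Lp) * (L * Lpᵀ) := by simp only [mul_assoc]
    _ = Lp * (L * Lpᵀ) := by rw [hp2]
    _ = Lp * L * Lpᵀ := by rw [mul_assoc]
  have key2 : Lpᵀ = Lp * L * Lpᵀ := by
    have f2 : Lpᵀ * L = (Lp * L) * (Lpᵀ * L) := by
      calc Lpᵀ * L = L * Lp := e1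
      _ = (L * Lpᵀ * L) * Lp := by rw [e3]
      _ = (L * Lpᵀ) * (L * Lp) := by simp only [mul_assoc]
      _ = (Lp * L) * (Lpᵀ * L) := by rw [e2, e1]
    calc Lpᵀ = Lpᵀ * L * Lpᵀ := e4.symm
    _ = ((Lp * L) * (Lpᵀ * L)) * Lpᵀ := by rw [← f2]
    _ = (Lp * L) * (Lpᵀ * L * Lpᵀ) := by simp only [mul_assoc]
    _ = (Lp * L) * Lpᵀ := by rw [e4]
  rw [key2, ← key1]

theorem measure_resistance_le_coupling_avg
    (n : ℕ) (L Lp : Matrix (Fin n) (Fin n) ℝ)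
    (hpsd : L.PosSemidef)
    (hp1 : L * Lp * L = L) (hp2 : Lp * L * Lp = Lp)
    (hp3 : (L * Lp)ᵀ = L * Lp) (hp4 : (Lp * L)ᵀ = Lp * L)
    (α β : Fin n → ℝ)
    (hα : (∀ i, 0 ≤ α i) ∧ ∑ i, α i = 1)
    (hβ : (∀ i, 0 ≤ β i) ∧ ∑ i, β i = 1)
    (π : Matrix (Fin n) (Fin n) ℝ)
    (hπpos : ∀ i j, 0 ≤ π i j)
    (hπrow : ∀ i, ∑ j, π i j = α i)
    (hπcol : ∀ j, ∑ i, π i j = β j) :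
    (α - β) ⬝ᵥ Lp.mulVec (α - β) ≤
      ∑ i, ∑ j, π i j *
        ((Pi.single i 1 - Pi.single j 1) ⬝ᵥ Lp.mulVec (Pi.single i 1 - Pi.single j 1)) := by
  classical
  have hsym : Lpᵀ = Lp := lp_symm' n L Lp hpsd hp1 hp2 hp3 hp4
  obtain ⟨D, hD⟩ : ∃ D : Matrix (Fin n) (Fin n) ℝ, L = Dᴴ * D := by
    open scoped MatrixOrder Matrix.Norms.L2Operator in
    exact CStarAlgebra.nonneg_iff_eq_star_mul_self.mp hpsd.nonneg
  have hD' : L = Dᵀ * D := by simpa using hD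
  set C : Matrix (Fin n) (Fin n) ℝ := D * Lp with hCdef
  have hC : Lp = Cᵀ * C := by
    calc Lp = Lp * L * Lp := hp2.symm
    _ = Lpᵀ * (Dᵀ * D) * Lp := by rw [hsym, hD']
    _ = (Lpᵀ * Dᵀ) * (D * Lp) := by simp only [mul_assoc]
    _ = Cᵀ * C := by rw [hCdef, transpose_mul]
  -- quadratic form as sum of squares
  have hq : ∀ x : Fin n → ℝ, x ⬝ᵥ Lp.mulVec x = ∑ m, (C.mulVec x m) ^ 2 := by
    intro x
    rw [hC, ← Matrix.mulVec_mulVec, Matrix.dotProduct_mulVec, Matrix.vecMul_transpose]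
    simp [dotProduct, sq]
  have hvij : ∀ (i j : Fin n) (m : Fin n),
      C.mulVec (Pi.single i 1 - Pi.single j 1) m = C m i - C m j := by
    intro i j m
    simp [Matrix.mulVec, dotProduct, Pi.single_apply, mul_sub, Finset.sum_sub_distrib,
      mul_ite]
  have hdec : ∀ m, C.mulVec (α - β) m = ∑ i, ∑ j, π i j * (C m i - C m j) := by
    intro m
    have h1 : ∑ i, ∑ j, π i j * C m i = ∑ k, α k * C m k := by
      refine Finset.sum_congr rfl fun i _ => ?_
      rw [← Finset.sum_mul, hπrow]
    have h2 : ∑ i, ∑ j, π i j * C m j = ∑ k, β k * C m k := by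
      rw [Finset.sum_comm]
      refine Finset.sum_congr rfl fun j _ => ?_
      rw [← Finset.sum_mul, hπcol]
    simp only [mul_sub, Finset.sum_sub_distrib, h1, h2]
    simp [Matrix.mulVec, dotProduct, sub_mul, mul_sub, Finset.sum_sub_distrib, mul_comm]
  -- total coupling mass is 1
  have hmass : ∑ p : Fin n × Fin n, π p.1 p.2 = 1 := by
    rw [← Finset.univ_product_univ, Finset.sum_product]
    simp only [hπrow]
    exact hα.2
  -- per-coordinate Cauchy-Schwarz
  have hCS : ∀ m : Fin n,
      (∑ i, ∑ j, π i j * (C m i - C m j)) ^ 2 ≤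
        ∑ i, ∑ j, π i j * (C m i - C m j) ^ 2 := by
    intro m
    have := Finset.sum_sq_le_sum_mul_sum_of_sq_eq_mul (Finset.univ : Finset (Fin n × Fin n))
      (r := fun p => π p.1 p.2 * (C m p.1 - C m p.2))
      (f := fun p => π p.1 p.2)
      (g := fun p => π p.1 p.2 * (C m p.1 - C m p.2) ^ 2)
      (fun p _ => hπpos p.1 p.2)
      (fun p _ => mul_nonneg (hπpos p.1 p.2) (sq_nonneg _))
      (fun p _ => by ring)
    rw [hmass, one_mul] at this
    calc (∑ i, ∑ j, π i j * (C m i - C m j)) ^ 2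
        = (∑ p : Fin n × Fin n, π p.1 p.2 * (C m p.1 - C m p.2)) ^ 2 := by
          rw [← Finset.univ_product_univ, Finset.sum_product]
      _ ≤ ∑ p : Fin n × Fin n, π p.1 p.2 * (C m p.1 - C m p.2) ^ 2 := this
      _ = ∑ i, ∑ j, π i j * (C m i - C m j) ^ 2 := by
          rw [← Finset.univ_product_univ, Finset.sum_product]
  calc (α - β) ⬝ᵥ Lp.mulVec (α - β)
      = ∑ m, (C.mulVec (α - β) m) ^ 2 := hq _
    _ = ∑ m, (∑ i, ∑ j, π i j * (C m i - C m j)) ^ 2 := by simp only [hdec]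
    _ ≤ ∑ m, ∑ i, ∑ j, π i j * (C m i - C m j) ^ 2 :=
        Finset.sum_le_sum fun m _ => hCS m
    _ = ∑ i, ∑ j, π i j * ∑ m, (C m i - C m j) ^ 2 := by
        rw [Finset.sum_comm]
        refine Finset.sum_congr rfl fun i _ => ?_
        rw [Finset.sum_comm]
        refine Finset.sum_congr rfl fun j _ => ?_
        rw [Finset.mul_sum]
    _ = ∑ i, ∑ j, π i j *
        ((Pi.single i 1 - Pi.single j 1) ⬝ᵥ Lp.mulVec (Pi.single i 1 - Pi.single j 1)) := by
        refine Finset.sum_congr rfl fun i _ => Finset.sum_congr rfl fun j _ => ?_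
        rw [hq]
        simp only [hvij]
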